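/- Assume 0 < θ ≤ 6/25 and let 0 < c⋆ < C⋆ with C⋆ ≤ 12/25 − 2θ. Let q ∈ ℝ^p be a unit vector with c⋆ < ‖Aᵀq‖_∞² < C⋆, and suppose ‖Hess F(q) − Hess f(q)‖_op ≤ δ₂ with δ₂ ≤ c⋆/25. Then there exists v ∈ ℝ^p with vᵀ Hess F(q) v < 0. In particular, if θ ≤ 1/9 and C⋆ ≤ 1/4, there exists a unit vector v with vᵀ Hess F(q) v < −(21/100)‖Aᵀq‖_∞² < −c⋆/5. -/

import Mathlib

open Matrix MeasureTheory ProbabilityTheory Real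
open scoped BigOperators ENNReal

noncomputable section

/-- squared Euclidean norm -/
def l2sq {m : ℕ} (v : Fin m → ℝ) : ℝ := ∑ i, v i ^ 2

/-- fourth power of the ℓ₄ norm -/
def l4p4 {m : ℕ} (v : Fin m → ℝ) : ℝ := ∑ i, v i ^ 4

/-- Euclidean norm -/
def l2norm {m : ℕ} (v : Fin m → ℝ) : ℝ := Real.sqrt (l2sq v)

/-- squared sup-norm -/
def linfSq {m : ℕ} (v : Fin m → ℝ) : ℝ := ⨆ i, (v i) ^ 2

/-- projection onto the orthogonal complement of q -/
def proj {p : ℕ} (q : Fin p → ℝ) : Matrix (Fin p) (Fin p) ℝ := 1 - Matrix.vecMulVec q q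

def zeta {p r : ℕ} (A : Matrix (Fin p) (Fin r) ℝ) (q : Fin p → ℝ) : Fin r → ℝ := Aᵀ *ᵥ q

/-- population objective -/
def fpop {p r : ℕ} (θ : ℝ) (A : Matrix (Fin p) (Fin r) ℝ) (q : Fin p → ℝ) : ℝ :=
  -(1/4) * ((1 - θ) * l4p4 (zeta A q) + θ * (l2sq (zeta A q)) ^ 2)

/-- Riemannian gradient of the population objective -/
def gradf {p r : ℕ} (θ : ℝ) (A : Matrix (Fin p) (Fin r) ℝ) (q : Fin p → ℝ) : Fin p → ℝ :=
  -((proj q) *ᵥ ((1 - θ) • (A *ᵥ fun j => (zeta A q j) ^ 3)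
      + (θ * l2sq (zeta A q)) • (A *ᵥ zeta A q)))

/-- Riemannian Hessian of the population objective -/
def hessf {p r : ℕ} (θ : ℝ) (A : Matrix (Fin p) (Fin r) ℝ) (q : Fin p → ℝ) :
    Matrix (Fin p) (Fin p) ℝ :=
  -((1 - θ) • (proj q *
      ((3 : ℝ) • (A * Matrix.diagonal (fun j => (zeta A q j) ^ 2) * Aᵀ)
        - l4p4 (zeta A q) • (1 : Matrix (Fin p) (Fin p) ℝ)) * proj q))
  - θ • (proj q *
      (l2sq (zeta A q) • (A * Aᵀ)
        + (2 : ℝ) • (A * Aᵀ * Matrix.vecMulVec q q * (A * Aᵀ))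
        - (l2sq (zeta A q)) ^ 2 • (1 : Matrix (Fin p) (Fin p) ℝ)) * proj q)

/-- quadratic form -/
def qform {p : ℕ} (M : Matrix (Fin p) (Fin p) ℝ) (v : Fin p → ℝ) : ℝ := v ⬝ᵥ (M *ᵥ v)

/-- α(q) -/
def alphaf {p r : ℕ} (θ : ℝ) (A : Matrix (Fin p) (Fin r) ℝ) (q : Fin p → ℝ) : ℝ :=
  l4p4 (zeta A q) + (θ / (1 - θ)) * ((l2sq (zeta A q)) ^ 2 - l2sq (zeta A q))

/-- columns of X -/
def colX {r n : ℕ} (X : Matrix (Fin r) (Fin n) ℝ) (k : Fin n) : Fin r → ℝ := fun i => X i k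

/-- finite-sample objective -/
def Ffun {p r n : ℕ} (θ σ : ℝ) (A : Matrix (Fin p) (Fin r) ℝ) (X : Matrix (Fin r) (Fin n) ℝ)
    (q : Fin p → ℝ) : ℝ :=
  -(1 / (12 * θ * σ ^ 4 * n)) * ∑ k : Fin n, (q ⬝ᵥ (A *ᵥ colX X k)) ^ 4

/-- Riemannian gradient of the finite-sample objective -/
def gradF {p r n : ℕ} (θ σ : ℝ) (A : Matrix (Fin p) (Fin r) ℝ) (X : Matrix (Fin r) (Fin n) ℝ)
    (q : Fin p → ℝ) : Fin p → ℝ :=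
  (-(1 / (3 * θ * σ ^ 4 * n))) •
    ((proj q) *ᵥ ∑ k : Fin n, ((q ⬝ᵥ (A *ᵥ colX X k)) ^ 3) • (A *ᵥ colX X k))

/-- Riemannian Hessian of the finite-sample objective -/
def hessF {p r n : ℕ} (θ σ : ℝ) (A : Matrix (Fin p) (Fin r) ℝ) (X : Matrix (Fin r) (Fin n) ℝ)
    (q : Fin p → ℝ) : Matrix (Fin p) (Fin p) ℝ :=
  (-(1 / (3 * θ * σ ^ 4 * n))) •
    ∑ k : Fin n, proj q *
      ((3 * (q ⬝ᵥ (A *ᵥ colX X k)) ^ 2) • Matrix.vecMulVec (A *ᵥ colX X k) (A *ᵥ colX X k)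
        - ((q ⬝ᵥ (A *ᵥ colX X k)) ^ 4) • (1 : Matrix (Fin p) (Fin p) ℝ)) * proj q

/-- spectral norm of a rectangular matrix -/
def opNorm {m n : ℕ} (M : Matrix (Fin m) (Fin n) ℝ) : ℝ :=
  ‖LinearMap.toContinuousLinearMap (Matrix.toEuclideanLin M)‖

/-- Bernoulli(θ) law on ℝ -/
def bernoulliReal (θ : ℝ) : Measure ℝ :=
  ENNReal.ofReal θ • Measure.dirac (1 : ℝ) + ENNReal.ofReal (1 - θ) • Measure.dirac (0 : ℝ)

/-- Bernoulli–Gaussian law BG(θ, σ²) on ℝ -/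
def bgLaw (θ σ2 : ℝ) : Measure ℝ :=
  ((bernoulliReal θ).prod (gaussianReal 0 σ2.toNNReal)).map fun p => p.1 * p.2

/-- law of a random vector in ℝ^r with i.i.d. BG(θ, σ²) entries -/
def bgVec (r : ℕ) (θ σ2 : ℝ) : Measure (Fin r → ℝ) :=
  Measure.pi fun _ : Fin r => bgLaw θ σ2

/-- law of a random r×n matrix with i.i.d. BG(θ, σ²) entries -/
def bgMatrix (r n : ℕ) (θ σ2 : ℝ) : Measure (Fin r → Fin n → ℝ) :=
  Measure.pi fun _ : Fin r => Measure.pi fun _ : Fin n => bgLaw θ σ2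



section Helpers

private lemma keyineq (θ s t u : ℝ) (hθ0 : 0 < θ) (hθ : θ ≤ 6/25) (hs0 : 0 < s) (hs : s < 12/25)
    (hst : s ≤ t) (ht1 : t ≤ 1) (hu1 : s^2 ≤ u) (hu2 : u ≤ s*t) :
    -((1-θ)*(3*(s - 2*s^2 + s*u) - u*(1-s))) - θ*(t*(1-2*s+s*t) + 2*s*(1-t)^2 - t^2*(1-s))
      ≤ -(1/4)*(s*(1-s)) := by
  have ht0 : 0 < t := lt_of_lt_of_le hs0 hst
  have hg : 0 ≤ s*(1-s) := by nlinarith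
  have hpos : 0 ≤ t + 2*s - 4*s*t := by
    rcases le_or_gt s (1/4) with h | h
    · nlinarith [mul_nonneg ht0.le (by linarith : (0:ℝ) ≤ 1 - 4*s)]
    · nlinarith [mul_nonneg (by linarith : (0:ℝ) ≤ 1 - t) (by linarith : (0:ℝ) ≤ 4*s - 1)]
  have hG2 : 0 ≤ (1-t)*(t + 2*s - 4*s*t) := mul_nonneg (by linarith) hpos
  have hG2' : t*(1-2*s+s*t) + 2*s*(1-t)^2 - t^2*(1-s) = (1-t)*(t + 2*s - 4*s*t) := by ring
  rw [hG2']
  have hG1 : s*(1-s) ≤ 3*(s - 2*s^2 + s*u) - u*(1-s) := by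
    rcases le_or_gt s (1/4) with h | h
    · have hA1 : 0 ≤ (s*t - u)*(1 - 4*s) := mul_nonneg (by linarith) (by linarith)
      have hA2 : 0 ≤ (s*(1-t))*(1 - 4*s) :=
        mul_nonneg (mul_nonneg hs0.le (by linarith)) (by linarith)
      nlinarith
    · have hA1 : 0 ≤ (u - s^2)*(4*s - 1) := mul_nonneg (by linarith) (by linarith)
      have hA2 : 0 ≤ (s*(1-s))*(3 - 4*s - 1) := mul_nonneg hg (by linarith)
      nlinarith
  nlinarith [mul_nonneg (by linarith : (0:ℝ) ≤ 1 - θ)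
      (by linarith : 0 ≤ 3*(s - 2*s^2 + s*u) - u*(1-s) - s*(1-s)),
    mul_nonneg (by linarith : (0:ℝ) ≤ 1 - θ) hg,
    mul_nonneg hθ0.le hG2]

private lemma qform_le_opNorm' {p : ℕ} (M : Matrix (Fin p) (Fin p) ℝ) (v : Fin p → ℝ) :
    v ⬝ᵥ (M *ᵥ v) ≤ opNorm M * l2sq v := by
  set x : EuclideanSpace ℝ (Fin p) := (WithLp.equiv 2 _).symm v with hx
  have h1 : v ⬝ᵥ (M *ᵥ v)
      = inner ℝ x ((LinearMap.toContinuousLinearMap (Matrix.toEuclideanLin M)) x) := by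
    simp [hx, Matrix.toEuclideanLin_apply, EuclideanSpace.inner_eq_star_dotProduct]
    exact dotProduct_comm _ _
  have h2 : ‖x‖^2 = l2sq v := by
    rw [EuclideanSpace.norm_eq, Real.sq_sqrt (by positivity)]
    simp [l2sq, hx, sq_abs]
  calc v ⬝ᵥ (M *ᵥ v)
      ≤ ‖x‖ * ‖(LinearMap.toContinuousLinearMap (Matrix.toEuclideanLin M)) x‖ := by
        rw [h1]; exact real_inner_le_norm _ _
    _ ≤ ‖x‖ * (opNorm M * ‖x‖) :=
        mul_le_mul_of_nonneg_left (ContinuousLinearMap.le_opNorm _ _) (norm_nonneg _)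
    _ = opNorm M * l2sq v := by rw [← h2]; ring

private lemma vecMulVec_mulVec' {p : ℕ} (a b x : Fin p → ℝ) :
    Matrix.vecMulVec a b *ᵥ x = (b ⬝ᵥ x) • a := by
  funext k
  simp only [Matrix.mulVec, Matrix.vecMulVec_apply, dotProduct, Pi.smul_apply, smul_eq_mul,
    Finset.sum_mul]
  exact Finset.sum_congr rfl fun j _ => by ring

private lemma vecMulVec_transpose' {p : ℕ} (q : Fin p → ℝ) :
    (Matrix.vecMulVec q q)ᵀ = Matrix.vecMulVec q q := by
  ext j k; simp [Matrix.vecMulVec_apply, mul_comm]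

end Helpers

theorem stmt9 (p r n : ℕ) (hr : 1 ≤ r) (hrp : r ≤ p) (hn : 1 ≤ n)
    (A : Matrix (Fin p) (Fin r) ℝ) (hA : Aᵀ * A = 1)
    (X : Matrix (Fin r) (Fin n) ℝ)
    (θ σ cstar Cstar δ2 : ℝ) (hθ0 : 0 < θ) (hθ : θ ≤ 6/25) (hσ : 0 < σ)
    (hc0 : 0 < cstar) (hcC : cstar < Cstar) (hC : Cstar ≤ 12/25 - 2*θ)
    (q : Fin p → ℝ) (hq : l2sq q = 1)
    (hlow : cstar < linfSq (zeta A q)) (hhigh : linfSq (zeta A q) < Cstar)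
    (hδ : opNorm (hessF θ σ A X q - hessf θ A q) ≤ δ2) (hδ2 : δ2 ≤ cstar/25) :
    (∃ v : Fin p → ℝ, qform (hessF θ σ A X q) v < 0) ∧
    (θ ≤ 1/9 → Cstar ≤ 1/4 →
      ∃ v : Fin p → ℝ, l2sq v = 1 ∧
        qform (hessF θ σ A X q) v < -(21/100) * linfSq (zeta A q) ∧
        -(21/100) * linfSq (zeta A q) < -cstar/5) :=  by
  classical
  have hrne : Nonempty (Fin r) := ⟨⟨0, by omega⟩⟩
  set ζ : Fin r → ℝ := zeta A q with hζdef
  obtain ⟨i, hi⟩ := Finite.exists_max (fun j : Fin r => ζ j ^ 2)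
  set s : ℝ := ζ i ^ 2 with hsdef
  set t : ℝ := l2sq ζ with htdef
  set u : ℝ := l4p4 ζ with hudef
  have hsup : linfSq ζ = s := by
    refine le_antisymm (ciSup_le hi) ?_
    exact le_ciSup (f := fun j : Fin r => ζ j ^ 2) (Set.Finite.bddAbove (Set.finite_range _)) i
  have hs0 : 0 < s := lt_of_le_of_lt hc0.le (by rw [← hsup]; exact hlow)
  have hs12 : s < 12/25 := by
    have := hhigh; rw [hsup] at this; linarith
  -- basic dot product facts
  have hqq : q ⬝ᵥ q = 1 := by
    have : q ⬝ᵥ q = l2sq q := by simp [l2sq, dotProduct, pow_two]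
    rw [this, hq]
  have hζAq : Aᵀ *ᵥ q = ζ := rfl
  set colA : Fin p → ℝ := fun k => A k i with hcolA
  have hcc : colA ⬝ᵥ colA = 1 := by
    have h := congrFun (congrFun hA i) i
    simpa [Matrix.mul_apply, Matrix.one_apply, dotProduct, Matrix.transpose_apply, hcolA,
      pow_two] using h
  have hqc : q ⬝ᵥ colA = ζ i := by
    simp [hζdef, zeta, Matrix.mulVec, dotProduct, Matrix.transpose_apply, hcolA, mul_comm]
  have hcq : colA ⬝ᵥ q = ζ i := by rw [dotProduct_comm]; exact hqc
  set w : Fin p → ℝ := colA - ζ i • q with hwdef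
  have hqw : q ⬝ᵥ w = 0 := by
    simp [hwdef, dotProduct_sub, dotProduct_smul, hqc, hqq, smul_eq_mul]
  have hPw : proj q *ᵥ w = w := by
    unfold proj
    rw [Matrix.sub_mulVec, Matrix.one_mulVec, vecMulVec_mulVec', hqw, zero_smul, sub_zero]
  have hPt : (proj q)ᵀ = proj q := by
    unfold proj; rw [Matrix.transpose_sub, Matrix.transpose_one, vecMulVec_transpose']
  have hdw : ∀ x : Fin p → ℝ, w ⬝ᵥ (proj q *ᵥ x) = w ⬝ᵥ x := by
    intro x
    rw [dotProduct_mulVec, ← Matrix.mulVec_transpose, hPt, hPw]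
  set y : Fin r → ℝ := Aᵀ *ᵥ w with hydef
  have hy : ∀ j, y j = (if j = i then 1 else 0) - ζ i * ζ j := by
    intro j
    have h1 : (Aᵀ *ᵥ colA) j = (Aᵀ * A) j i := by
      simp [Matrix.mulVec, Matrix.mul_apply, dotProduct, hcolA]
    have : y j = (Aᵀ *ᵥ colA) j - ζ i * (Aᵀ *ᵥ q) j := by
      simp [hydef, hwdef, Matrix.mulVec_sub, Matrix.mulVec_smul]
    rw [this, h1, hA, hζAq, Matrix.one_apply]
  have hdAx : ∀ x : Fin r → ℝ, w ⬝ᵥ (A *ᵥ x) = y ⬝ᵥ x := by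
    intro x
    rw [dotProduct_mulVec, ← Matrix.mulVec_transpose]
  -- scalar quantities
  have hww : w ⬝ᵥ w = 1 - s := by
    simp only [hwdef, dotProduct_sub, sub_dotProduct, dotProduct_smul, smul_dotProduct,
      smul_eq_mul, hcc, hqc, hcq, hqq]
    rw [hsdef]; ring
  have hst : s ≤ t := by
    rw [hsdef, htdef]
    exact Finset.single_le_sum (f := fun j => ζ j ^ 2) (fun j _ => sq_nonneg _)
      (Finset.mem_univ i)
  have hu1 : s^2 ≤ u := by
    rw [hsdef, hudef]
    calc (ζ i ^ 2)^2 = ζ i ^ 4 := by ring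
      _ ≤ ∑ j, ζ j ^ 4 := Finset.single_le_sum (f := fun j => ζ j ^ 4)
          (fun j _ => by positivity) (Finset.mem_univ i)
  have hu2 : u ≤ s * t := by
    rw [hudef, htdef, l2sq, l4p4, Finset.mul_sum]
    refine Finset.sum_le_sum fun j _ => ?_
    have h1 : ζ j ^ 2 ≤ s := hi j
    calc ζ j ^ 4 = ζ j ^ 2 * ζ j ^ 2 := by ring
      _ ≤ s * ζ j ^ 2 := mul_le_mul_of_nonneg_right h1 (sq_nonneg _)
  have hζζ : ζ ⬝ᵥ ζ = t := by simp [htdef, l2sq, dotProduct, pow_two]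
  have ht1 : t ≤ 1 := by
    have h1 : q ⬝ᵥ (A *ᵥ ζ) = t := by
      rw [dotProduct_mulVec, ← Matrix.mulVec_transpose, hζAq, hζζ]
    have h2 : (A *ᵥ ζ) ⬝ᵥ (A *ᵥ ζ) = t := by
      rw [dotProduct_mulVec, ← Matrix.mulVec_transpose, Matrix.mulVec_mulVec, hA,
        Matrix.one_mulVec, hζζ]
    have h3 : 0 ≤ (q - A *ᵥ ζ) ⬝ᵥ (q - A *ᵥ ζ) :=
      Finset.sum_nonneg fun k _ => mul_self_nonneg _
    have h4 : (A *ᵥ ζ) ⬝ᵥ q = t := by rw [dotProduct_comm]; exact h1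
    simp only [dotProduct_sub, sub_dotProduct, hqq, h1, h2, h4] at h3
    linarith
  -- the four quadratic quantities
  have hyy : y ⬝ᵥ y = 1 - 2*s + s*t := by
    have hper : ∀ j, y j * y j
        = (if j = i then 1 - 2*(ζ i * ζ i) else 0) + ζ i ^ 2 * ζ j ^ 2 := by
      intro j
      by_cases h : j = i
      · subst h; rw [hy]; simp; ring
      · rw [hy]; simp [h]; ring
    calc y ⬝ᵥ y = ∑ j, ((if j = i then 1 - 2*(ζ i * ζ i) else 0) + ζ i ^ 2 * ζ j ^ 2) :=
          Finset.sum_congr rfl fun j _ => hper j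
      _ = (1 - 2*(ζ i * ζ i)) + ζ i ^ 2 * (∑ j, ζ j ^ 2) := by
          rw [Finset.sum_add_distrib, Finset.sum_ite_eq' Finset.univ i, ← Finset.mul_sum]
          simp
      _ = 1 - 2*s + s*t := by rw [hsdef, htdef, l2sq]; ring
  have hζy : ζ ⬝ᵥ y = ζ i * (1 - t) := by
    have hper : ∀ j, ζ j * y j = (if j = i then ζ i else 0) - ζ i * ζ j ^ 2 := by
      intro j
      by_cases h : j = i
      · subst h; rw [hy]; simp; ring
      · rw [hy]; simp [h]; ring
    calc ζ ⬝ᵥ y = ∑ j, ((if j = i then ζ i else 0) - ζ i * ζ j ^ 2) :=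
          Finset.sum_congr rfl fun j _ => hper j
      _ = ζ i - ζ i * (∑ j, ζ j ^ 2) := by
          rw [Finset.sum_sub_distrib, Finset.sum_ite_eq' Finset.univ i, ← Finset.mul_sum]
          simp
      _ = ζ i * (1 - t) := by rw [htdef, l2sq]; ring
  have hQ1 : w ⬝ᵥ ((A * Matrix.diagonal (fun j => ζ j ^ 2) * Aᵀ) *ᵥ w)
      = s - 2*s^2 + s*u := by
    rw [← Matrix.mulVec_mulVec, ← Matrix.mulVec_mulVec, ← hydef, hdAx]
    have hper : ∀ j, y j * (Matrix.diagonal (fun j => ζ j ^ 2) *ᵥ y) j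
        = (if j = i then ζ i ^ 2 * (1 - 2*(ζ i * ζ i)) else 0) + ζ i ^ 2 * ζ j ^ 4 := by
      intro j
      rw [Matrix.mulVec_diagonal]
      by_cases h : j = i
      · subst h; rw [hy]; simp; ring
      · rw [hy]; simp [h]; ring
    calc y ⬝ᵥ (Matrix.diagonal (fun j => ζ j ^ 2) *ᵥ y)
        = ∑ j, ((if j = i then ζ i ^ 2 * (1 - 2*(ζ i * ζ i)) else 0) + ζ i ^ 2 * ζ j ^ 4) :=
          Finset.sum_congr rfl fun j _ => hper j
      _ = ζ i ^ 2 * (1 - 2*(ζ i * ζ i)) + ζ i ^ 2 * (∑ j, ζ j ^ 4) := by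
          rw [Finset.sum_add_distrib, Finset.sum_ite_eq' Finset.univ i, ← Finset.mul_sum]
          simp
      _ = s - 2*s^2 + s*u := by rw [hsdef, hudef, l4p4]; ring
  have hQ3 : w ⬝ᵥ ((A * Aᵀ) *ᵥ w) = 1 - 2*s + s*t := by
    rw [← Matrix.mulVec_mulVec, ← hydef, hdAx, hyy]
  have hQ4 : w ⬝ᵥ ((A * Aᵀ * Matrix.vecMulVec q q * (A * Aᵀ)) *ᵥ w) = s * (1-t)^2 := by
    have e1 : (A * Aᵀ * Matrix.vecMulVec q q * (A * Aᵀ)) *ᵥ w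
        = A *ᵥ (Aᵀ *ᵥ (Matrix.vecMulVec q q *ᵥ (A *ᵥ y))) := by
      rw [← Matrix.mulVec_mulVec, ← Matrix.mulVec_mulVec, ← Matrix.mulVec_mulVec,
        ← Matrix.mulVec_mulVec, ← hydef]
    rw [e1, vecMulVec_mulVec']
    have e2 : q ⬝ᵥ (A *ᵥ y) = ζ i * (1 - t) := by
      rw [dotProduct_mulVec, ← Matrix.mulVec_transpose, hζAq, hζy]
    rw [e2, Matrix.mulVec_smul, hζAq, hdAx, dotProduct_smul, smul_eq_mul, dotProduct_comm,
      hζy, hsdef]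
    ring
  -- qform hessf w
  have hqformP : ∀ Z : Matrix (Fin p) (Fin p) ℝ,
      w ⬝ᵥ ((proj q * Z * proj q) *ᵥ w) = w ⬝ᵥ (Z *ᵥ w) := by
    intro Z
    rw [← Matrix.mulVec_mulVec, ← Matrix.mulVec_mulVec, hPw, hdw]
  have hE : qform (hessf θ A q) w
      = -((1-θ)*(3*(s - 2*s^2 + s*u) - u*(1-s)))
        - θ*(t*(1-2*s+s*t) + 2*s*(1-t)^2 - t^2*(1-s)) := by
    unfold qform hessf
    rw [← hζdef, ← htdef, ← hudef]
    rw [Matrix.sub_mulVec, Matrix.neg_mulVec, Matrix.smul_mulVec,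
      Matrix.smul_mulVec, dotProduct_sub, dotProduct_neg, dotProduct_smul,
      dotProduct_smul, hqformP, hqformP]
    simp only [Matrix.sub_mulVec, Matrix.add_mulVec, Matrix.smul_mulVec,
      Matrix.one_mulVec, dotProduct_sub, dotProduct_add, dotProduct_smul]
    rw [hQ1, hQ3, hQ4, hww]
    simp only [smul_eq_mul]
    ring
  have hkey : qform (hessf θ A q) w ≤ -(1/4)*(s*(1-s)) := by
    rw [hE]
    exact keyineq θ s t u hθ0 (by linarith) hs0 hs12 hst ht1 hu1 hu2
  -- normalize
  have h1s : 0 < 1 - s := by linarith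
  set c : ℝ := (Real.sqrt (1-s))⁻¹ with hcdef
  have hc2 : c^2 = (1-s)⁻¹ := by
    rw [hcdef, ← Real.sqrt_inv]
    exact Real.sq_sqrt (by positivity)
  set v : Fin p → ℝ := c • w with hvdef
  have hl2w : l2sq w = 1 - s := by
    rw [← hww]; simp [l2sq, dotProduct, pow_two]
  have hl2v : l2sq v = 1 := by
    have : l2sq v = c^2 * l2sq w := by
      simp [hvdef, l2sq, Finset.mul_sum, mul_pow]
    rw [this, hc2, hl2w]
    field_simp
  have hqsc : ∀ M : Matrix (Fin p) (Fin p) ℝ, qform M v = c^2 * qform M w := by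
    intro M
    unfold qform
    rw [hvdef, Matrix.mulVec_smul, dotProduct_smul, smul_dotProduct, smul_eq_mul, smul_eq_mul]
    ring
  have hfv : qform (hessf θ A q) v ≤ -(1/4)*s := by
    rw [hqsc, hc2]
    have h2 : (1-s)⁻¹ * qform (hessf θ A q) w ≤ (1-s)⁻¹ * (-(1/4)*(s*(1-s))) :=
      mul_le_mul_of_nonneg_left hkey (by positivity)
    calc (1-s)⁻¹ * qform (hessf θ A q) w ≤ (1-s)⁻¹ * (-(1/4)*(s*(1-s))) := h2
      _ = -(1/4)*s := by field_simp
  -- perturbation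
  have hsplit : qform (hessF θ σ A X q) v
      = qform (hessf θ A q) v + qform (hessF θ σ A X q - hessf θ A q) v := by
    unfold qform
    rw [Matrix.sub_mulVec, dotProduct_sub]
    ring
  have hpert : qform (hessF θ σ A X q - hessf θ A q) v ≤ δ2 := by
    calc qform (hessF θ σ A X q - hessf θ A q) v
        ≤ opNorm (hessF θ σ A X q - hessf θ A q) * l2sq v := qform_le_opNorm' _ _
      _ = opNorm (hessF θ σ A X q - hessf θ A q) := by rw [hl2v, mul_one]
      _ ≤ δ2 := hδ
  have hδ2s : δ2 < s/25 := by
    have : cstar/25 < s/25 := by linarith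
    linarith
  have hmain : qform (hessF θ σ A X q) v < -(21/100)*s := by
    rw [hsplit]
    calc qform (hessf θ A q) v + qform (hessF θ σ A X q - hessf θ A q) v
        ≤ -(1/4)*s + δ2 := add_le_add hfv hpert
      _ < -(21/100)*s := by linarith
  have hneg : -(21/100)*s < 0 := by
    rw [neg_mul, neg_lt_zero]
    positivity
  constructor
  · exact ⟨v, lt_trans hmain hneg⟩
  · intro _ _
    refine ⟨v, hl2v, ?_, ?_⟩
    · rw [hsup]; exact hmain
    · rw [hsup]; linarith


end
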